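/- Let λ = 0 and H_RB = kX_∞ the free Rota-Baxter algebra of weight zero on X. Then for all n ≥ 0, Δ(H^(n)) ⊆ ⊕_{p+q=n} H^(p) ⊗ H^(q); that is, the coproduct Δ respects the total degree grading. -/

import Mathlib

open TensorProduct

universe u v

/-- Letters of Rota-Baxter bracketed words: either a variable from `X` or a
bracketed word `⌊w⌋` (a list of letters). -/
inductive RBL (X : Type u) : Type u
  | var : X → RBL X
  | br : List (RBL X) → RBL X

namespace RBL

variable {X : Type u}

/-- `a.isBr = true` iff the letter `a` is a bracketed element `⌊w⌋ ∈ ⌊X_∞⌋`. -/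
def isBr : RBL X → Bool
  | var _ => false
  | br _ => true

mutual
  /-- Validity of a letter: the inside of a bracket must be a Rota-Baxter bracketed word. -/
  def valid : RBL X → Prop
    | var _ => True
    | br l => wordValid l
  /-- `wordValid l` says that the list of letters `l` is a Rota-Baxter bracketed word,
  i.e. all letters are valid and the letters alternate (no two consecutive brackets). -/
  def wordValid : List (RBL X) → Prop
    | [] => True
    | [a] => valid a
    | a :: b :: l => valid a ∧ ¬(a.isBr = true ∧ b.isBr = true) ∧ wordValid (b :: l)
end

lemma wordValid_nil : wordValid ([] : List (RBL X)) := by simp [wordValid]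

lemma wordValid_var (x : X) : wordValid [var x] := by simp [wordValid, valid]

lemma wordValid_br {l : List (RBL X)} (h : wordValid l) : wordValid [br l] := by
  simpa [wordValid, valid] using h

mutual
  /-- The total degree of a letter. -/
  def degL : RBL X → ℕ
    | var _ => 1
    | br l => degW l + 1
  /-- The total degree of a word: the number of occurrences of brackets (i.e. of `P`)
  plus the number of occurrences of letters of `X`. -/
  def degW : List (RBL X) → ℕ
    | [] => 0
    | a :: l => degL a + degW l
end

end RBL

/-- The set `X_∞` of Rota-Baxter bracketed words on `X`. -/
def RBWord (X : Type u) : Type u := {l : List (RBL X) // RBL.wordValid l}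

namespace RBWord

variable {X : Type u}

/-- The empty word `1`. -/
def one : RBWord X := ⟨[], RBL.wordValid_nil⟩

/-- The total degree of a Rota-Baxter bracketed word. -/
def deg (w : RBWord X) : ℕ := RBL.degW w.1

end RBWord

variable (k : Type v) [CommRing k] (X : Type u)

/-- The free `k`-module `kX_∞` on the Rota-Baxter bracketed words. -/
abbrev RBMod : Type max u v := RBWord X →₀ k

variable {X}

/-- A Rota-Baxter bracketed word viewed as a basis element of `kX_∞`. -/
noncomputable def sing (w : RBWord X) : RBMod k X := Finsupp.single w 1

variable (X)

/-- The Rota-Baxter operator `P` on `kX_∞`, sending a basis word `w` to `⌊w⌋`. -/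
noncomputable def Pop : RBMod k X →ₗ[k] RBMod k X :=
  Finsupp.lmapDomain k k fun w => (⟨[RBL.br w.1], RBL.wordValid_br w.2⟩ : RBWord X)

/-- Concatenation on the left by `u₀` and on the right by `v₀`, as a linear map on `kX_∞`
(sending basis words whose concatenation is not valid to `0`; in all uses below
the concatenations are valid). -/
noncomputable def concatLR (u₀ v₀ : List (RBL X)) : RBMod k X →ₗ[k] RBMod k X :=
  Finsupp.lsum k fun w =>
    letI := Classical.dec (RBL.wordValid (u₀ ++ w.1 ++ v₀))
    if h : RBL.wordValid (u₀ ++ w.1 ++ v₀) then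
      Finsupp.lsingle (⟨u₀ ++ w.1 ++ v₀, h⟩ : RBWord X) else 0

/-- The counit `ε : kX_∞ → k`, `ε(1) = 1` and `ε(w) = 0` for basis words `w ≠ 1`. -/
noncomputable def eps : RBMod k X →ₗ[k] k := Finsupp.lapply RBWord.one

/-- The homogeneous component `H^(n)` of `kX_∞`: the span of the basis words of total
degree `n`. -/
noncomputable def Hdeg (n : ℕ) : Submodule k (RBMod k X) :=
  Finsupp.supported k k {w : RBWord X | w.deg = n}

variable (lam : k)

/-- The data of the product `⋄` on the free Rota-Baxter algebra `kX_∞` of weight `lam`,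
together with its recursive defining equations:
* if the concatenation of `u` and `v` is again a Rota-Baxter bracketed word (in particular
  if `u` or `v` is empty, or if the last letter of `u` or the first letter of `v` is a
  variable), then `u ⋄ v` is the concatenation `uv`;
* if `u = u₀⌊ā⌋` and `v = ⌊b̄⌋v₀`, then
  `u ⋄ v = u₀(⌊⌊ā⌋ ⋄ b̄⌋ + ⌊ā ⋄ ⌊b̄⌋⌋ + λ⌊ā ⋄ b̄⌋)v₀`. -/
structure FreeRBAData where
  /-- the product `⋄`, as a `k`-bilinear map -/
  d : RBMod k X →ₗ[k] RBMod k X →ₗ[k] RBMod k X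
  d_concat : ∀ (u v : RBWord X) (h : RBL.wordValid (u.1 ++ v.1)),
    d (sing k u) (sing k v) = sing k ⟨u.1 ++ v.1, h⟩
  d_br : ∀ (u₀ v₀ : List (RBL X)) (a b : RBWord X)
    (hu : RBL.wordValid (u₀ ++ [RBL.br a.1])) (hv : RBL.wordValid (RBL.br b.1 :: v₀)),
    d (sing k ⟨u₀ ++ [RBL.br a.1], hu⟩) (sing k ⟨RBL.br b.1 :: v₀, hv⟩)
      = concatLR k X u₀ v₀
          (Pop k X (d (Pop k X (sing k a)) (sing k b))
            + Pop k X (d (sing k a) (Pop k X (sing k b)))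
            + lam • Pop k X (d (sing k a) (sing k b)))

namespace FreeRBAData

variable {k X lam}

/-- The componentwise product `⋄ ⊗ ⋄` on `kX_∞ ⊗ kX_∞`. -/
noncomputable def mulT (D : FreeRBAData k X lam) :
    (RBMod k X ⊗[k] RBMod k X) →ₗ[k] (RBMod k X ⊗[k] RBMod k X) →ₗ[k]
      (RBMod k X ⊗[k] RBMod k X) :=
  TensorProduct.map₂ D.d D.d

end FreeRBAData

/-- The free Rota-Baxter algebra `kX_∞` of weight `lam` together with the coproduct `Δ`,
characterized by its recursive defining equations:
`Δ(1) = 1 ⊗ 1`, `Δ(x) = x ⊗ 1 + 1 ⊗ x` for `x ∈ X`,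
`Δ(⌊w⌋) = ⌊w⌋ ⊗ 1 + (id ⊗ P)Δ(w)`, and
`Δ(w₁ ⋄ ⋯ ⋄ w_m) = Δ(w₁) ⋄ ⋯ ⋄ Δ(w_m)` for the `⋄`-factorization of a word into its
(alternating) sequence of letters. -/
structure FreeRBBialgData extends FreeRBAData k X lam where
  /-- the coproduct `Δ` -/
  Dl : RBMod k X →ₗ[k] (RBMod k X ⊗[k] RBMod k X)
  Dl_one : Dl (sing k RBWord.one) = sing k RBWord.one ⊗ₜ[k] sing k RBWord.one
  Dl_var : ∀ (x : X),
    Dl (sing k ⟨[RBL.var x], RBL.wordValid_var x⟩)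
      = sing k ⟨[RBL.var x], RBL.wordValid_var x⟩ ⊗ₜ[k] sing k RBWord.one
        + sing k RBWord.one ⊗ₜ[k] sing k ⟨[RBL.var x], RBL.wordValid_var x⟩
  Dl_br : ∀ w : RBWord X,
    Dl (Pop k X (sing k w))
      = Pop k X (sing k w) ⊗ₜ[k] sing k RBWord.one
        + TensorProduct.map LinearMap.id (Pop k X) (Dl (sing k w))
  Dl_cons : ∀ (a : RBL X) (l : List (RBL X)) (h : RBL.wordValid (a :: l))
    (ha : RBL.wordValid [a]) (hl : RBL.wordValid l), l ≠ [] →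
    Dl (sing k ⟨a :: l, h⟩)
      = TensorProduct.map₂ d d (Dl (sing k ⟨[a], ha⟩)) (Dl (sing k ⟨l, hl⟩))

namespace RBL

variable {X : Type u}

lemma wordValid_map_var (s : List X) : wordValid (s.map RBL.var) := by
  induction s with
  | nil => exact wordValid_nil
  | cons a t ih =>
    cases t with
    | nil => exact wordValid_var a
    | cons b t' =>
      simp only [List.map_cons] at ih ⊢
      exact ⟨by simp [valid], by simp [isBr], ih⟩

end RBL

variable {X}

/-- The word `x₁ ⋯ x_m ∈ M(X)` as a basis element of `kX_∞`. -/
noncomputable def varWord (s : List X) : RBMod k X :=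
  sing k ⟨s.map RBL.var, RBL.wordValid_map_var s⟩

/-- A letter in `X ∪ ⌊X_∞⌋`, viewed as a basis element of `kX_∞` (invalid letters are
sent to `0`; they do not occur below). -/
noncomputable def letterMod (a : RBL X) : RBMod k X :=
  letI := Classical.dec (RBL.wordValid [a])
  if h : RBL.wordValid [a] then sing k ⟨[a], h⟩ else 0

variable (X)

/-- The tensor product `H^(p) ⊗ H^(q)` of homogeneous components, as a submodule of
`kX_∞ ⊗ kX_∞`. -/
noncomputable def HdegT (p q : ℕ) : Submodule k (RBMod k X ⊗[k] RBMod k X) :=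
  Submodule.map₂ (TensorProduct.mk k (RBMod k X) (RBMod k X)) (Hdeg k X p) (Hdeg k X q)

namespace FreeRBAData

variable {k X lam}

/-- The `⋄`-product `w₁ ⋄ (w₂ ⋄ (⋯ ⋄ (w_m ⋄ 1)))` of a sequence of letters. -/
noncomputable def prodList (D : FreeRBAData k X lam) (l : List (RBL X)) : RBMod k X :=
  l.foldr (fun a acc => D.d (letterMod k a) acc) (sing k RBWord.one)

end FreeRBAData

/-! ### Auxiliary lemmas for the grading theorem -/

namespace RBL

variable {X : Type u}

lemma degW_append (l l' : List (RBL X)) : degW (l ++ l') = degW l + degW l' := by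
  induction l with
  | nil => simp [degW]
  | cons a t ih => simp [degW, ih]; ring

lemma degL_pos (a : RBL X) : 1 ≤ degL a := by
  cases a <;> simp [degL]

lemma degW_pos {l : List (RBL X)} (h : l ≠ []) : 1 ≤ degW l := by
  cases l with
  | nil => exact absurd rfl h
  | cons a t => have := degL_pos a; simp [degW]; omega

lemma wordValid_head {a : RBL X} {l : List (RBL X)} (h : wordValid (a :: l)) :
    valid a := by
  cases l with
  | nil => simpa [wordValid] using h
  | cons b t => rw [wordValid] at h; exact h.1

lemma wordValid_tail {a : RBL X} {l : List (RBL X)} (h : wordValid (a :: l)) :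
    wordValid l := by
  cases l with
  | nil => exact wordValid_nil
  | cons b t => rw [wordValid] at h; exact h.2.2

lemma wordValid_last {l : List (RBL X)} {a : RBL X} (h : wordValid (l ++ [a])) :
    valid a := by
  induction l with
  | nil => simpa [wordValid] using h
  | cons b t ih =>
    exact ih (wordValid_tail (by simpa using h))

lemma wordValid_append {l l' : List (RBL X)} (hl : wordValid l) (hl' : wordValid l')
    (h : ∀ a b, l.getLast? = some a → l'.head? = some b →
      a.isBr = true → b.isBr = true → False) :
    wordValid (l ++ l') := by
  induction l with
  | nil => simpa
  | cons a t ih =>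
    cases t with
    | nil =>
      cases l' with
      | nil => simpa using hl
      | cons b t' =>
        rw [List.singleton_append, wordValid]
        refine ⟨by simpa [wordValid] using hl, ?_, hl'⟩
        rintro ⟨h1, h2⟩
        exact h a b (by simp) (by simp) h1 h2
    | cons c t2 =>
      rw [wordValid] at hl
      have htail : wordValid ((c :: t2) ++ l') := by
        refine ih hl.2.2 ?_
        intro a' b' h1 h2 h3 h4
        exact h a' b' (by rw [← h1]; exact (List.getLast?_cons_cons ..).symm ▸ rfl) h2 h3 h4
      rw [List.cons_append, List.cons_append, wordValid]
      exact ⟨hl.1, hl.2.1, htail⟩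

end RBL

section Aux

variable {k : Type v} [CommRing k] {X : Type u}

open RBL

lemma sing_def (w : RBWord X) : sing k w = Finsupp.single w (1 : k) := rfl

lemma sing_mem_Hdeg {n : ℕ} {w : RBWord X} (h : w.deg = n) :
    sing k w ∈ Hdeg k X n :=
  Finsupp.single_mem_supported k 1 h

lemma Pop_sing (w : RBWord X) :
    Pop k X (sing k w) = sing k ⟨[RBL.br w.1], RBL.wordValid_br w.2⟩ := by
  exact Finsupp.mapDomain_single

lemma Pop_mem {m : ℕ} {f : RBMod k X} (hf : f ∈ Hdeg k X m) :
    Pop k X f ∈ Hdeg k X (m + 1) := by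
  have hle : Hdeg k X m ≤ (Hdeg k X (m + 1)).comap (Pop k X) := by
    rw [Hdeg, Finsupp.supported_eq_span_single, Submodule.span_le]
    rintro _ ⟨w, hw, rfl⟩
    simp only [SetLike.mem_coe, Submodule.mem_comap]
    rw [← sing_def, Pop_sing]
    refine sing_mem_Hdeg ?_
    simp only [Set.mem_setOf_eq] at hw
    simp only [RBWord.deg, RBL.degW, RBL.degL] at hw ⊢
    omega
  exact hle hf

lemma concatLR_sing_mem (u₀ v₀ : List (RBL X)) (w : RBWord X) :
    concatLR k X u₀ v₀ (sing k w) ∈ Hdeg k X (degW u₀ + w.deg + degW v₀) := by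
  rw [concatLR, sing_def, Finsupp.lsum_single]
  split
  · rename_i h
    change sing k ⟨u₀ ++ w.1 ++ v₀, h⟩ ∈ _
    refine sing_mem_Hdeg ?_
    simp [RBWord.deg, degW_append]
    ring
  · simp

lemma concatLR_mem {m : ℕ} (u₀ v₀ : List (RBL X)) {f : RBMod k X}
    (hf : f ∈ Hdeg k X m) :
    concatLR k X u₀ v₀ f ∈ Hdeg k X (degW u₀ + m + degW v₀) := by
  have hle : Hdeg k X m ≤ (Hdeg k X (degW u₀ + m + degW v₀)).comap (concatLR k X u₀ v₀) := by
    rw [Hdeg, Finsupp.supported_eq_span_single, Submodule.span_le]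
    rintro _ ⟨w, hw, rfl⟩
    simp only [SetLike.mem_coe, Submodule.mem_comap]
    rw [← sing_def]
    simp only [Set.mem_setOf_eq] at hw
    rw [← hw]
    exact concatLR_sing_mem u₀ v₀ w
  exact hle hf

lemma concat_or_br (u v : RBWord X) :
    RBL.wordValid (u.1 ++ v.1) ∨
      ∃ (u₀ la lb : List (RBL X)) (v₀ : List (RBL X)),
        u.1 = u₀ ++ [RBL.br la] ∧ v.1 = RBL.br lb :: v₀ := by
  obtain ⟨ul, hu⟩ := u
  obtain ⟨vl, hv⟩ := v
  dsimp only
  rcases List.eq_nil_or_concat ul with rfl | ⟨u₀, c, rfl⟩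
  · left; simpa using hv
  · rw [List.concat_eq_append] at hu ⊢
    cases vl with
    | nil => left; simpa using hu
    | cons b v₀ =>
      cases c with
      | var x =>
        left
        refine wordValid_append hu hv ?_
        intro a' b' h1 h2 h3 h4
        rw [List.getLast?_concat] at h1
        cases h1
        simp [RBL.isBr] at h3
      | br la =>
        cases b with
        | var x =>
          left
          refine wordValid_append hu hv ?_
          intro a' b' h1 h2 h3 h4
          simp at h2
          cases h2
          simp [RBL.isBr] at h4
        | br lb => exact Or.inr ⟨u₀, la, lb, v₀, rfl, rfl⟩

lemma deg_eq_append {w : RBWord X} {u₀ : List (RBL X)} {la : List (RBL X)}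
    (h : w.1 = u₀ ++ [RBL.br la]) : w.deg = degW u₀ + degW la + 1 := by
  simp only [RBWord.deg, h, degW_append, RBL.degW, RBL.degL]
  omega

lemma deg_eq_cons {w : RBWord X} {v₀ : List (RBL X)} {lb : List (RBL X)}
    (h : w.1 = RBL.br lb :: v₀) : w.deg = degW lb + 1 + degW v₀ := by
  simp only [RBWord.deg, h, RBL.degW, RBL.degL]

/-- The product respects the grading on basis words. -/
lemma d_sing_mem (D : FreeRBAData k X (0 : k)) :
    ∀ (N : ℕ) (u v : RBWord X), u.deg + v.deg ≤ N →
      D.d (sing k u) (sing k v) ∈ Hdeg k X (u.deg + v.deg) := by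
  have concat_case : ∀ (u v : RBWord X), RBL.wordValid (u.1 ++ v.1) →
      D.d (sing k u) (sing k v) ∈ Hdeg k X (u.deg + v.deg) := by
    intro u v hconc
    rw [D.d_concat u v hconc]
    exact sing_mem_Hdeg (by simp [RBWord.deg, degW_append])
  intro N
  induction N with
  | zero =>
    intro u v h
    rcases concat_or_br u v with hconc | ⟨u₀, la, lb, v₀, hu, hv⟩
    · exact concat_case u v hconc
    · exfalso
      have := deg_eq_append hu
      omega
  | succ N ih =>
    intro u v h
    rcases concat_or_br u v with hconc | ⟨u₀, la, lb, v₀, hu, hv⟩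
    · exact concat_case u v hconc
    · -- extract validity
      obtain ⟨ul, huval⟩ := u
      obtain ⟨vl, hvval⟩ := v
      dsimp only at hu hv
      subst hu hv
      have hla : RBL.wordValid la := RBL.wordValid_last (l := u₀) huval
      have hlb : RBL.wordValid lb := RBL.wordValid_head hvval
      set a : RBWord X := ⟨la, hla⟩ with ha
      set b : RBWord X := ⟨lb, hlb⟩ with hb
      have key := D.d_br u₀ v₀ a b huval hvval
      rw [zero_smul, add_zero] at key
      have hdu : RBWord.deg (⟨u₀ ++ [RBL.br a.1], huval⟩ : RBWord X)
          = degW u₀ + degW la + 1 := deg_eq_append rfl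
      have hdv : RBWord.deg (⟨RBL.br b.1 :: v₀, hvval⟩ : RBWord X)
          = degW lb + 1 + degW v₀ := deg_eq_cons rfl
      have harith : degW u₀ + degW la + 1 + (degW lb + 1 + degW v₀) ≤ N + 1 := by
        have h1 := deg_eq_append (w := (⟨u₀ ++ [RBL.br la], huval⟩ : RBWord X)) rfl
        have h2 := deg_eq_cons (w := (⟨RBL.br lb :: v₀, hvval⟩ : RBWord X)) rfl
        rw [h1, h2] at h
        exact h
      rw [key]
      -- degrees of the small words
      have hdega : a.deg = degW la := rfl
      have hdegb : b.deg = degW lb := rfl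
      have hdegPa : RBWord.deg (⟨[RBL.br a.1], RBL.wordValid_br a.2⟩ : RBWord X)
          = degW la + 1 := by simp only [RBWord.deg, RBL.degW, RBL.degL]; rfl
      have hdegPb : RBWord.deg (⟨[RBL.br b.1], RBL.wordValid_br b.2⟩ : RBWord X)
          = degW lb + 1 := by simp only [RBWord.deg, RBL.degW, RBL.degL]; rfl
      -- first recursive term
      have t1 : D.d (Pop k X (sing k a)) (sing k b)
          ∈ Hdeg k X (degW la + 1 + degW lb) := by
        rw [Pop_sing]
        have := ih (⟨[RBL.br a.1], RBL.wordValid_br a.2⟩ : RBWord X) b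
          (by rw [hdegPa, hdegb]; omega)
        rwa [hdegPa, hdegb] at this
      have t2 : D.d (sing k a) (Pop k X (sing k b))
          ∈ Hdeg k X (degW la + (degW lb + 1)) := by
        rw [Pop_sing]
        have := ih a (⟨[RBL.br b.1], RBL.wordValid_br b.2⟩ : RBWord X)
          (by rw [hdegPb, hdega]; omega)
        rwa [hdegPb, hdega] at this
      have m1 : Pop k X (D.d (Pop k X (sing k a)) (sing k b))
          ∈ Hdeg k X (degW la + 1 + degW lb + 1) := Pop_mem t1
      have m2 : Pop k X (D.d (sing k a) (Pop k X (sing k b)))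
          ∈ Hdeg k X (degW la + (degW lb + 1) + 1) := by
        exact Pop_mem t2
      have m2' : Pop k X (D.d (sing k a) (Pop k X (sing k b)))
          ∈ Hdeg k X (degW la + 1 + degW lb + 1) := by
        have : degW la + (degW lb + 1) + 1 = degW la + 1 + degW lb + 1 := by omega
        rwa [this] at m2
      have msum : Pop k X (D.d (Pop k X (sing k a)) (sing k b))
            + Pop k X (D.d (sing k a) (Pop k X (sing k b)))
          ∈ Hdeg k X (degW la + 1 + degW lb + 1) := add_mem m1 m2'
      have final := concatLR_mem u₀ v₀ msum
      have heq : degW u₀ + (degW la + 1 + degW lb + 1) + degW v₀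
          = RBWord.deg (⟨u₀ ++ [RBL.br a.1], huval⟩ : RBWord X)
            + RBWord.deg (⟨RBL.br b.1 :: v₀, hvval⟩ : RBWord X) := by
        rw [hdu, hdv]; omega
      rw [heq] at final
      exact final

/-- The product respects the grading. -/
lemma d_mem (D : FreeRBAData k X (0 : k)) {p q : ℕ} {f g : RBMod k X}
    (hf : f ∈ Hdeg k X p) (hg : g ∈ Hdeg k X q) :
    D.d f g ∈ Hdeg k X (p + q) := by
  have H1 : ∀ u : RBWord X, u.deg = p →
      ∀ g' ∈ Hdeg k X q, D.d (sing k u) g' ∈ Hdeg k X (p + q) := by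
    intro u hu g' hg'
    have hle : Hdeg k X q ≤ (Hdeg k X (p + q)).comap (D.d (sing k u)) := by
      rw [Hdeg, Finsupp.supported_eq_span_single, Submodule.span_le]
      rintro _ ⟨v, hv, rfl⟩
      simp only [SetLike.mem_coe, Submodule.mem_comap]
      rw [← sing_def]
      simp only [Set.mem_setOf_eq] at hv
      have := d_sing_mem D (u.deg + v.deg) u v le_rfl
      rwa [hu, hv] at this
    exact hle hg'
  have hle : Hdeg k X p ≤ (Hdeg k X (p + q)).comap ((D.d).flip g) := by
    rw [Hdeg, Finsupp.supported_eq_span_single, Submodule.span_le]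
    rintro _ ⟨u, hu, rfl⟩
    simp only [SetLike.mem_coe, Submodule.mem_comap, LinearMap.flip_apply]
    rw [← sing_def]
    exact H1 u hu g hg
  exact hle hf

variable (k X) in
/-- The target of the coproduct in degree `n`. -/
noncomputable def SupN (n : ℕ) : Submodule k (RBMod k X ⊗[k] RBMod k X) :=
  ⨆ (p : ℕ) (q : ℕ) (_ : p + q = n), HdegT k X p q

lemma HdegT_le_SupN {p q n : ℕ} (h : p + q = n) : HdegT k X p q ≤ SupN k X n :=
  le_iSup_of_le p (le_iSup_of_le q (le_iSup_of_le h le_rfl))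

lemma SupN_le {n : ℕ} {T : Submodule k (RBMod k X ⊗[k] RBMod k X)}
    (h : ∀ p q, p + q = n → HdegT k X p q ≤ T) : SupN k X n ≤ T :=
  iSup_le fun p => iSup_le fun q => iSup_le fun hpq => h p q hpq

lemma tmul_mem_HdegT {p q : ℕ} {x y : RBMod k X}
    (hx : x ∈ Hdeg k X p) (hy : y ∈ Hdeg k X q) :
    x ⊗ₜ[k] y ∈ HdegT k X p q :=
  Submodule.apply_mem_map₂ (TensorProduct.mk k (RBMod k X) (RBMod k X)) hx hy

lemma mapRight_mem {m : ℕ} {t : RBMod k X ⊗[k] RBMod k X} (ht : t ∈ SupN k X m) :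
    TensorProduct.map LinearMap.id (Pop k X) t ∈ SupN k X (m + 1) := by
  have hle : SupN k X m
      ≤ (SupN k X (m + 1)).comap (TensorProduct.map LinearMap.id (Pop k X)) := by
    refine SupN_le fun p q hpq => ?_
    rw [HdegT, Submodule.map₂_le]
    intro x hx y hy
    simp only [Submodule.mem_comap]
    have : TensorProduct.map LinearMap.id (Pop k X)
        ((TensorProduct.mk k (RBMod k X) (RBMod k X)) x y) = x ⊗ₜ[k] Pop k X y := by
      simp [TensorProduct.mk_apply]
    rw [this]
    exact HdegT_le_SupN (by omega) (tmul_mem_HdegT hx (Pop_mem hy))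
  exact hle ht

lemma mulT_mem (D : FreeRBAData k X (0 : k)) {m m' : ℕ}
    {t t' : RBMod k X ⊗[k] RBMod k X} (ht : t ∈ SupN k X m) (ht' : t' ∈ SupN k X m') :
    TensorProduct.map₂ D.d D.d t t' ∈ SupN k X (m + m') := by
  have inner : ∀ p q, p + q = m → ∀ p' q', p' + q' = m' →
      ∀ y ∈ HdegT k X p' q', ∀ x ∈ HdegT k X p q,
        TensorProduct.map₂ D.d D.d x y ∈ HdegT k X (p + p') (q + q') := by
    intro p q hpq p' q' hpq' y hy
    have hle : HdegT k X p q ≤ (HdegT k X (p + p') (q + q')).comap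
        ((TensorProduct.map₂ D.d D.d).flip y) := by
      rw [HdegT, Submodule.map₂_le]
      intro a ha b hb
      simp only [Submodule.mem_comap, LinearMap.flip_apply, TensorProduct.mk_apply]
      rw [TensorProduct.map₂_apply_tmul]
      have hle2 : HdegT k X p' q' ≤ (HdegT k X (p + p') (q + q')).comap
          (TensorProduct.map (D.d a) (D.d b)) := by
        rw [HdegT, Submodule.map₂_le]
        intro a' ha' b' hb'
        simp only [Submodule.mem_comap, TensorProduct.mk_apply, TensorProduct.map_tmul]
        exact tmul_mem_HdegT (d_mem D ha ha') (d_mem D hb hb')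
      exact hle2 hy
    intro x hx
    exact hle hx
  have hle : SupN k X m
      ≤ (SupN k X (m + m')).comap ((TensorProduct.map₂ D.d D.d).flip t') := by
    refine SupN_le fun p q hpq => fun x hx => ?_
    simp only [Submodule.mem_comap, LinearMap.flip_apply]
    have hle2 : SupN k X m'
        ≤ (SupN k X (m + m')).comap (TensorProduct.map₂ D.d D.d x) := by
      refine SupN_le fun p' q' hpq' => fun y hy => ?_
      simp only [Submodule.mem_comap]
      exact HdegT_le_SupN (by omega) (inner p q hpq p' q' hpq' y hy x hx)
    exact hle2 ht'
  exact hle ht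

/-- The coproduct respects the grading on basis words. -/
lemma Dl_sing_mem (D : FreeRBBialgData k X (0 : k)) :
    ∀ (N : ℕ) (w : RBWord X), w.deg ≤ N → D.Dl (sing k w) ∈ SupN k X w.deg := by
  have one_mem : sing k (RBWord.one : RBWord X) ∈ Hdeg k X 0 :=
    sing_mem_Hdeg rfl
  have nil_case : ∀ (h : RBL.wordValid ([] : List (RBL X))),
      D.Dl (sing k (⟨[], h⟩ : RBWord X)) ∈ SupN k X (RBWord.deg (⟨[], h⟩ : RBWord X)) := by
    intro h
    have : (⟨[], h⟩ : RBWord X) = RBWord.one := rfl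
    rw [this]
    have h0 : RBWord.deg (RBWord.one : RBWord X) = 0 := rfl
    rw [h0, D.Dl_one]
    exact HdegT_le_SupN (by omega) (tmul_mem_HdegT one_mem one_mem)
  intro N
  induction N with
  | zero =>
    intro w hw
    obtain ⟨l, hval⟩ := w
    cases l with
    | nil => exact nil_case hval
    | cons a t =>
      exfalso
      have := degL_pos a
      simp [RBWord.deg, RBL.degW] at hw
      omega
  | succ N ih =>
    intro w hw
    obtain ⟨l, hval⟩ := w
    match l with
    | [] => exact nil_case hval
    | [RBL.var x] =>
      have : (⟨[RBL.var x], hval⟩ : RBWord X)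
          = ⟨[RBL.var x], RBL.wordValid_var x⟩ := rfl
      rw [this]
      have hd : RBWord.deg (⟨[RBL.var x], RBL.wordValid_var x⟩ : RBWord X) = 1 := by
        simp [RBWord.deg, RBL.degW, RBL.degL]
      rw [hd, D.Dl_var]
      have hx : sing k (⟨[RBL.var x], RBL.wordValid_var x⟩ : RBWord X)
          ∈ Hdeg k X 1 := sing_mem_Hdeg hd
      exact add_mem
        (HdegT_le_SupN (by omega) (tmul_mem_HdegT hx one_mem))
        (HdegT_le_SupN (by omega) (tmul_mem_HdegT one_mem hx))
    | [RBL.br l'] =>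
      have hval' : RBL.wordValid l' := by
        have := RBL.wordValid_head (a := RBL.br l') (l := []) hval
        exact this
      set w' : RBWord X := ⟨l', hval'⟩ with hw'
      have hsing : sing k (⟨[RBL.br l'], hval⟩ : RBWord X) = Pop k X (sing k w') := by
        rw [Pop_sing]
      have hd : RBWord.deg (⟨[RBL.br l'], hval⟩ : RBWord X) = w'.deg + 1 := by
        simp [RBWord.deg, RBL.degW, RBL.degL]
        rfl
      rw [hsing, D.Dl_br]
      rw [hd]
      have hP : Pop k X (sing k w') ∈ Hdeg k X (w'.deg + 1) :=
        Pop_mem (sing_mem_Hdeg rfl)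
      refine add_mem (HdegT_le_SupN (by omega) (tmul_mem_HdegT hP one_mem)) ?_
      have hrec : D.Dl (sing k w') ∈ SupN k X w'.deg := by
        refine ih w' ?_
        have : RBWord.deg (⟨[RBL.br l'], hval⟩ : RBWord X) ≤ N + 1 := hw
        omega
      exact mapRight_mem hrec
    | a :: b :: t =>
      have hne : (b :: t : List (RBL X)) ≠ [] := by simp
      have ha : RBL.wordValid [a] := by
        have := RBL.wordValid_head hval
        cases a <;> simpa [RBL.wordValid, RBL.valid] using this
      have hl : RBL.wordValid (b :: t) := RBL.wordValid_tail hval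
      rw [D.Dl_cons a (b :: t) hval ha hl hne]
      have hd : RBWord.deg (⟨a :: b :: t, hval⟩ : RBWord X)
          = RBWord.deg (⟨[a], ha⟩ : RBWord X) + RBWord.deg (⟨b :: t, hl⟩ : RBWord X) := by
        simp [RBWord.deg, RBL.degW]
      have h1 : RBWord.deg (⟨[a], ha⟩ : RBWord X) ≤ N := by
        have hp := degW_pos (l := b :: t) hne
        simp [RBL.degW] at hp
        have : RBWord.deg (⟨a :: b :: t, hval⟩ : RBWord X) ≤ N + 1 := hw
        simp [RBWord.deg, RBL.degW] at this ⊢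
        omega
      have h2 : RBWord.deg (⟨b :: t, hl⟩ : RBWord X) ≤ N := by
        have hp := degL_pos a
        have : RBWord.deg (⟨a :: b :: t, hval⟩ : RBWord X) ≤ N + 1 := hw
        simp [RBWord.deg, RBL.degW] at this ⊢
        omega
      rw [hd]
      exact mulT_mem D.toFreeRBAData (ih _ h1) (ih _ h2)

end Aux

/-- In the free Rota-Baxter algebra of weight zero, the coproduct `Δ`
respects the total degree grading: `Δ(H^(n)) ⊆ ⊕_{p+q=n} H^(p) ⊗ H^(q)` for all `n ≥ 0`. -/
theorem coproduct_respects_grading_weight_zero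
    {k : Type v} [CommRing k] {X : Type u} (D : FreeRBBialgData k X (0 : k))
    (n : ℕ) (f : RBMod k X) (hf : f ∈ Hdeg k X n) :
    D.Dl f ∈ ⨆ (p : ℕ) (q : ℕ) (_ : p + q = n), HdegT k X p q := by
  show D.Dl f ∈ SupN k X n
  have hle : Hdeg k X n ≤ (SupN k X n).comap D.Dl := by
    rw [Hdeg, Finsupp.supported_eq_span_single, Submodule.span_le]
    rintro _ ⟨w, hw, rfl⟩
    simp only [SetLike.mem_coe, Submodule.mem_comap]
    rw [← sing_def]
    simp only [Set.mem_setOf_eq] at hw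
    rw [← hw]
    exact Dl_sing_mem D w.deg w le_rfl
  exact hle hf
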